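/- The ℂ-linear span h of {X1, X2, X3} is closed under the matrix commutator (hence is a Lie subalgebra of gl(4,ℂ)) and has complex dimension 3, i.e. X1, X2, X3 are linearly independent over ℂ. -/

import Mathlib

open Matrix

noncomputable section

def X1 (α β : ℂ) : Matrix (Fin 4) (Fin 4) ℂ :=
  !![1,1,0,1; 1,1,0,0; α,β,0,0; 0,0,0,0]

def X2 (α β : ℂ) : Matrix (Fin 4) (Fin 4) ℂ :=
  !![1,1,0,0; 1,1,0,1; β-1,α+1,0,0; 0,0,0,0]

def X3 : Matrix (Fin 4) (Fin 4) ℂ :=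
  !![0,0,0,0; 0,0,0,0; 0,0,0,1; 0,0,0,0]

/-- The ℂ-linear span of {X1, X2, X3}. -/
def h (α β : ℂ) : Submodule ℂ (Matrix (Fin 4) (Fin 4) ℂ) :=
  Submodule.span ℂ {X1 α β, X2 α β, X3}

lemma br12 (α β : ℂ) : ⁅X1 α β, X2 α β⁆ = X3 := by
  ext i j
  fin_cases i <;> fin_cases j <;>
    simp [X1, X2, X3, Ring.lie_def, Matrix.mul_apply, Fin.sum_univ_four,
      Matrix.vecHead, Matrix.vecTail] <;> ring_nf

lemma br13 (α β : ℂ) : ⁅X1 α β, X3⁆ = 0 := by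
  ext i j
  fin_cases i <;> fin_cases j <;>
    simp [X1, X3, Ring.lie_def, Matrix.mul_apply, Fin.sum_univ_four,
      Matrix.vecHead, Matrix.vecTail]

lemma br23 (α β : ℂ) : ⁅X2 α β, X3⁆ = 0 := by
  ext i j
  fin_cases i <;> fin_cases j <;>
    simp [X2, X3, Ring.lie_def, Matrix.mul_apply, Fin.sum_univ_four] <;> ring

lemma li (α β : ℂ) : LinearIndependent ℂ ![X1 α β, X2 α β, X3] := by
  rw [Fintype.linearIndependent_iff]
  intro g hg
  have h0 := congrFun (congrFun hg 0) 3
  have h1 := congrFun (congrFun hg 1) 3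
  have h2 := congrFun (congrFun hg 2) 3
  simp [Fin.sum_univ_three, X1, X2, X3] at h0 h1 h2
  intro i
  fin_cases i <;> assumption

/-- h is closed under the matrix commutator and has complex dimension 3;
X1, X2, X3 are linearly independent over ℂ. -/
theorem h_subalgebra_dim_three (α β : ℂ) :
    (∀ A ∈ h α β, ∀ B ∈ h α β, ⁅A, B⁆ ∈ h α β) ∧
    Module.finrank ℂ (h α β) = 3 ∧
    LinearIndependent ℂ ![X1 α β, X2 α β, X3] := by
  have hgen : ∀ x ∈ ({X1 α β, X2 α β, X3} : Set _), ∀ y ∈ ({X1 α β, X2 α β, X3} : Set _),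
      ⁅x, y⁆ ∈ h α β := by
    have h3 : X3 ∈ h α β := Submodule.subset_span (by simp)
    rintro x (rfl|rfl|rfl) y (rfl|rfl|rfl)
    · rw [Ring.lie_def, sub_self]; exact Submodule.zero_mem _
    · rw [br12]; exact h3
    · rw [br13]; exact Submodule.zero_mem _
    · have e := br12 α β; rw [Ring.lie_def] at e ⊢; rw [← neg_sub, e]; exact Submodule.neg_mem _ h3
    · rw [Ring.lie_def, sub_self]; exact Submodule.zero_mem _
    · rw [br23]; exact Submodule.zero_mem _
    · have e := br13 α β; rw [Ring.lie_def] at e ⊢; rw [← neg_sub, e, neg_zero]; exact Submodule.zero_mem _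
    · have e := br23 α β; rw [Ring.lie_def] at e ⊢; rw [← neg_sub, e, neg_zero]; exact Submodule.zero_mem _
    · rw [Ring.lie_def, sub_self]; exact Submodule.zero_mem _
  have closed : ∀ A ∈ h α β, ∀ B ∈ h α β, ⁅A, B⁆ ∈ h α β := by
    intro A hA B hB
    induction hA using Submodule.span_induction with
    | mem x hx =>
      induction hB using Submodule.span_induction with
      | mem y hy => exact hgen x hx y hy
      | zero => simpa [Ring.lie_def] using Submodule.zero_mem (h α β)
      | add y z _ _ hy hz => rw [Ring.lie_def] at hy hz ⊢; convert Submodule.add_mem _ hy hz using 1; noncomm_ring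
      | smul c y _ hy => rw [Ring.lie_def] at hy ⊢; convert Submodule.smul_mem _ c hy using 1; rw [mul_smul_comm, smul_mul_assoc, smul_sub]
    | zero => simpa [Ring.lie_def] using Submodule.zero_mem (h α β)
    | add x y _ _ hx hy => rw [Ring.lie_def] at hx hy ⊢; convert Submodule.add_mem _ hx hy using 1; noncomm_ring
    | smul c x _ hx => rw [Ring.lie_def] at hx ⊢; convert Submodule.smul_mem _ c hx using 1; rw [mul_smul_comm, smul_mul_assoc, smul_sub]
  have hli := li α β
  refine ⟨closed, ?_, hli⟩
  have hrange : Set.range ![X1 α β, X2 α β, X3] = {X1 α β, X2 α β, X3} := by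
    ext x
    simp only [Set.mem_range, Set.mem_insert_iff, Set.mem_singleton_iff]
    constructor
    · rintro ⟨i, rfl⟩; fin_cases i <;> simp
    · rintro (rfl|rfl|rfl)
      exacts [⟨0, rfl⟩, ⟨1, rfl⟩, ⟨2, rfl⟩]
  rw [h, ← hrange, finrank_span_eq_card hli, Fintype.card_fin]
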